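/- Let n ≥ 2 be an odd integer and w = max(ν_2(n-1), ν_2(n+1)). Then for every m ≥ 2, 2^{w + ⌊m/2⌋} divides T_n^{(m)}(-1). -/

import Mathlib

open Polynomial Polynomial.Chebyshev


lemma cheb_ode (n : ℤ) :
    (1 - (X:ℤ[X])^2) * derivative (derivative (T ℤ n)) =
      X * derivative (T ℤ n) - (n:ℤ[X])^2 * T ℤ n := by
  have h1 : derivative (T ℤ n) = (n:ℤ[X]) * U ℤ (n-1) := T_derivative_eq_U (R := ℤ) n
  have h2 := add_one_mul_T_eq_poly_in_U (R := ℤ) (n-1)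
  simp only [sub_add_cancel] at h2
  push_cast at h2
  rw [h1, derivative_mul]
  simp only [Polynomial.derivative_intCast, zero_mul, zero_add]
  linear_combination (n:ℤ[X]) * h2

lemma cheb_ode_iter (n : ℤ) : ∀ m : ℕ,
    (1 - (X:ℤ[X])^2) * derivative^[m+2] (T ℤ n) =
      (2*(m:ℤ[X])+1) * X * derivative^[m+1] (T ℤ n)
        - ((n:ℤ[X])^2 - (m:ℤ[X])^2) * derivative^[m] (T ℤ n) := by
  have key : ∀ k : ℕ, derivative (derivative^[k] (T ℤ n)) = derivative^[k+1] (T ℤ n) :=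
    fun k => (Function.iterate_succ_apply' _ _ _).symm
  intro m
  induction m with
  | zero =>
      simp only [Nat.cast_zero, Function.iterate_succ, Function.iterate_zero, Function.comp,
        id_eq, Function.iterate_one]
      have := cheb_ode n
      push_cast
      linear_combination this
  | succ m ih =>
      have h' := congrArg derivative ih
      simp only [derivative_mul, derivative_sub, derivative_add, derivative_one,
        Polynomial.derivative_natCast, Polynomial.derivative_intCast, derivative_X,
        derivative_ofNat, Polynomial.derivative_X_pow, Polynomial.derivative_pow, Polynomial.C_eq_intCast, Polynomial.C_eq_natCast, Nat.cast_ofNat, map_ofNat, key] at h'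
      push_cast at h' ⊢
      have e1 : m + 1 + 2 = m + 2 + 1 := rfl
      have e2 : m + 1 + 1 = m + 1 + 1 := rfl
      rw [e1]
      linear_combination h'

lemma cheb_rec (n : ℤ) (m : ℕ) :
    (2*(m:ℤ)+1) * (derivative^[m+1] (T ℤ n)).eval (-1) =
      -((n:ℤ)^2 - (m:ℤ)^2) * (derivative^[m] (T ℤ n)).eval (-1) := by
  have h := congrArg (Polynomial.eval (-1 : ℤ)) (cheb_ode_iter n m)
  simp only [eval_mul, eval_sub, eval_add, eval_one, eval_pow, eval_X, eval_intCast,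
    eval_natCast, eval_ofNat] at h
  norm_num at h
  rw [Function.iterate_succ_apply]
  linear_combination h

/-- Let `n ≥ 2` be odd and `w = max (ν₂ (n - 1)) (ν₂ (n + 1))`. Then for every `m ≥ 2`,
`2 ^ (w + ⌊m / 2⌋)` divides `T_n^{(m)}(-1)`. -/
theorem two_pow_dvd_chebyshev_iterated_deriv_neg_one (n : ℤ) (hn : 2 ≤ n) (hodd : Odd n)
    (w : ℕ) (hw : w = max (padicValInt 2 (n - 1)) (padicValInt 2 (n + 1))) :
    ∀ m : ℕ, 2 ≤ m →
      (2 : ℤ) ^ (w + m / 2) ∣ ((Polynomial.derivative)^[m] (T ℤ n)).eval (-1) := by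
  -- abbreviation
  set a : ℕ → ℤ := fun m => ((Polynomial.derivative)^[m] (T ℤ n)).eval (-1) with ha
  have hrec : ∀ m : ℕ, (2*(m:ℤ)+1) * a (m+1) = -((n:ℤ)^2 - (m:ℤ)^2) * a m := fun m => cheb_rec n m
  have hprime : Prime (2 : ℤ) := Int.prime_two
  have hcancel : ∀ (m : ℕ) (k : ℕ) (x : ℤ), (2:ℤ)^k ∣ (2*(m:ℤ)+1) * x → (2:ℤ)^k ∣ x := by
    intro m k x hx
    refine hprime.pow_dvd_of_dvd_mul_left k ?_ hx
    intro hdvd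
    omega
  -- key: 2^(w+1) ∣ n^2 - 1
  have hsq : (2:ℤ)^(w+1) ∣ n^2 - 1 := by
    have hfac : n^2 - 1 = (n - 1) * (n + 1) := by ring
    have hd1 : (2:ℤ)^(padicValInt 2 (n-1)) ∣ n - 1 := by
      simpa using padicValInt_dvd (p := 2) (n - 1)
    have hd2 : (2:ℤ)^(padicValInt 2 (n+1)) ∣ n + 1 := by
      simpa using padicValInt_dvd (p := 2) (n + 1)
    have he1 : (2:ℤ) ∣ n - 1 := by
      obtain ⟨k, hk⟩ := hodd; omega
    have he2 : (2:ℤ) ∣ n + 1 := by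
      obtain ⟨k, hk⟩ := hodd; omega
    rcases max_cases (padicValInt 2 (n - 1)) (padicValInt 2 (n + 1)) with ⟨h1, _⟩ | ⟨h1, _⟩
    · rw [hfac, hw, h1, pow_succ]
      exact mul_dvd_mul hd1 he2
    · rw [hfac, hw, h1, pow_succ']
      exact mul_dvd_mul he1 hd2
  intro m hm
  induction m, hm using Nat.le_induction with
  | base =>
      -- m = 2 : use hrec at 1 : 3 * a 2 = -(n^2-1) * a 1
      have h := hrec 1
      norm_num at h
      have : (2:ℤ)^(w+1) ∣ (2*(1:ℤ)+1) * a 2 := by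
        rw [show (2*(1:ℤ)+1) = 3 by norm_num]
        rw [h, show (1:ℤ) - n^2 = -(n^2-1) by ring, neg_mul]
        exact dvd_neg.mpr (hsq.mul_right _)
      simpa [ha] using hcancel 1 (w+1) (a 2) (by norm_num at this ⊢; exact this)
  | succ m hm2 ih =>
      have h := hrec m
      rcases Nat.even_or_odd m with he | ho
      · -- m even: (m+1)/2 = m/2
        obtain ⟨k, hk⟩ := he
        have hdiv : (m+1)/2 = m/2 := by omega
        rw [hdiv]
        refine hcancel m _ _ ?_
        rw [h]
        exact Dvd.dvd.mul_left ih _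
      · -- m odd: (m+1)/2 = m/2 + 1, and 2 ∣ n^2 - m^2
        obtain ⟨k, hk⟩ := ho
        have hdiv : (m+1)/2 = m/2 + 1 := by omega
        have h2 : (2:ℤ) ∣ -((n:ℤ)^2 - (m:ℤ)^2) := by
          obtain ⟨j, hj⟩ := hodd
          have hmz : (m:ℤ) = 2*(k:ℤ)+1 := by omega
          rw [hj, hmz]
          exact ⟨2*k^2+2*k-2*j^2-2*j, by ring⟩
        rw [hdiv]
        refine hcancel m _ _ ?_
        rw [h, show w + (m/2+1) = 1 + (w + m/2) by ring, pow_add, pow_one]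
        exact mul_dvd_mul h2 ih
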